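/- Let V be a real vector space of dimension n and Ω an alternating 2-form on V of rank p ≥ 1 (i.e. Ω^{∧p} ≠ 0 and Ω^{∧(p+1)} = 0). Then for every integer l with p ≤ l ≤ n − 2 there exists a nonzero alternating l-form β on V such that Ω ∧ β = 0. -/

import Mathlib

set_option synthInstance.maxHeartbeats 1000000
set_option maxHeartbeats 1000000

/-!
STATEMENT 2: If `Ω` is an alternating 2-form of rank `p ≥ 1` on an `n`-dimensional real
vector space `V`, then for every `l` with `p ≤ l ≤ n - 2` there is a nonzero `l`-form `β`
with `Ω ∧ β = 0`.  Forms of degree `k` are modelled as elements of `⋀[ℝ]^k (V^*)`, with the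
wedge product given by multiplication in the exterior algebra of the dual space.
-/
open ExteriorAlgebra

namespace Statement2Aux

variable {M : Type*} [AddCommGroup M] [Module ℝ M]

local notation "E" => ExteriorAlgebra ℝ M

/-- Contraction (interior product) by a dual vector. -/
noncomputable def ctr (d : Module.Dual ℝ M) : E →ₗ[ℝ] E :=
  CliffordAlgebra.contractLeft (Q := (0 : QuadraticForm ℝ M)) d

lemma ctr_ι_mul (d : Module.Dual ℝ M) (a : M) (b : E) :
    ctr d (ι ℝ a * b) = d a • b - ι ℝ a * ctr d b :=
  CliffordAlgebra.contractLeft_ι_mul (Q := (0 : QuadraticForm ℝ M)) d a b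

lemma ctr_ι (d : Module.Dual ℝ M) (a : M) :
    ctr d (ι ℝ a) = algebraMap ℝ E (d a) :=
  CliffordAlgebra.contractLeft_ι (Q := (0 : QuadraticForm ℝ M)) d a

lemma ctr_algebraMap (d : Module.Dual ℝ M) (r : ℝ) :
    ctr d (algebraMap ℝ E r) = 0 :=
  CliffordAlgebra.contractLeft_algebraMap (Q := (0 : QuadraticForm ℝ M)) d r

lemma ctr_one (d : Module.Dual ℝ M) : ctr d (1 : E) = 0 := by
  simpa using ctr_algebraMap d 1

lemma ctr_ctr (d : Module.Dual ℝ M) (x : E) : ctr d (ctr d x) = 0 :=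
  CliffordAlgebra.contractLeft_contractLeft (Q := (0 : QuadraticForm ℝ M)) d x

lemma ctr_comm (d d' : Module.Dual ℝ M) (x : E) :
    ctr d (ctr d' x) = -(ctr d' (ctr d x)) :=
  CliffordAlgebra.contractLeft_comm (Q := (0 : QuadraticForm ℝ M)) d d' x

lemma mul_algebraMap' (x : E) (r : ℝ) : x * algebraMap ℝ E r = r • x := by
  rw [← Algebra.commutes, ← Algebra.smul_def]

lemma ιMulti_two_apply (v : Fin 2 → M) : ιMulti ℝ 2 v = ι ℝ (v 0) * ι ℝ (v 1) := by
  simp [ιMulti_succ_apply, ιMulti_zero_apply, Matrix.vecTail, Function.comp]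

lemma mem2_induction {P : E → Prop} (h0 : P 0)
    (hadd : ∀ x y, P x → P y → P (x + y)) (hsmul : ∀ (c : ℝ) x, P x → P (c • x))
    (hgen : ∀ u v : M, P (ι ℝ u * ι ℝ v)) : ∀ x ∈ ⋀[ℝ]^2 M, P x := by
  intro x hx
  rw [← ιMulti_span_fixedDegree] at hx
  induction hx using Submodule.span_induction with
  | mem y hy => obtain ⟨v, rfl⟩ := hy; rw [ιMulti_two_apply]; exact hgen _ _
  | zero => exact h0
  | add a b _ _ ha hb => exact hadd a b ha hb
  | smul c a _ ha => exact hsmul c a ha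

lemma pair_mem (u v : M) : ι ℝ u * ι ℝ v ∈ ⋀[ℝ]^2 M := by
  rw [← ιMulti_span_fixedDegree]
  refine Submodule.subset_span ⟨![u, v], ?_⟩
  rw [ιMulti_two_apply]
  simp

lemma anticomm (u v : M) : ι ℝ v * ι ℝ u = -(ι ℝ u * ι ℝ v) :=
  eq_neg_of_add_eq_zero_right (ι_add_mul_swap u v)

lemma pair_sq (u v : M) : (ι ℝ u * ι ℝ v) * (ι ℝ u * ι ℝ v) = 0 := by
  have h : ι ℝ v * ι ℝ u = -(ι ℝ u * ι ℝ v) := anticomm u v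
  calc (ι ℝ u * ι ℝ v) * (ι ℝ u * ι ℝ v)
      = ι ℝ u * (ι ℝ v * ι ℝ u) * ι ℝ v := by noncomm_ring
    _ = ι ℝ u * (-(ι ℝ u * ι ℝ v)) * ι ℝ v := by rw [h]
    _ = -((ι ℝ u * ι ℝ u) * (ι ℝ v * ι ℝ v)) := by noncomm_ring
    _ = 0 := by rw [ι_sq_zero]; simp

lemma comm2 (m : M) {x : E} (hx : x ∈ ⋀[ℝ]^2 M) : Commute (ι ℝ m) x := by
  refine mem2_induction (P := fun x => Commute (ι ℝ m) x) (Commute.zero_right _)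
    (fun x y hx hy => hx.add_right hy)
    (fun c x hx => hx.smul_right c) (fun u v => ?_) x hx
  show ι ℝ m * (ι ℝ u * ι ℝ v) = (ι ℝ u * ι ℝ v) * ι ℝ m
  calc ι ℝ m * (ι ℝ u * ι ℝ v) = (ι ℝ m * ι ℝ u) * ι ℝ v := by rw [mul_assoc]
    _ = (-(ι ℝ u * ι ℝ m)) * ι ℝ v := by rw [anticomm u m]
    _ = -(ι ℝ u * (ι ℝ m * ι ℝ v)) := by noncomm_ring
    _ = -(ι ℝ u * (-(ι ℝ v * ι ℝ m))) := by rw [anticomm v m]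
    _ = (ι ℝ u * ι ℝ v) * ι ℝ m := by noncomm_ring

lemma comm22 {x y : E} (hx : x ∈ ⋀[ℝ]^2 M) (hy : y ∈ ⋀[ℝ]^2 M) : Commute x y := by
  exact mem2_induction (P := fun x => Commute x y) (Commute.zero_left _)
    (fun a b ha hb => ha.add_left hb)
    (fun c a ha => ha.smul_left c) (fun u v => ((comm2 u hy).mul_left (comm2 v hy))) x hx

lemma ctr_mul2 (d : Module.Dual ℝ M) {x : E} (hx : x ∈ ⋀[ℝ]^2 M) (y : E) :
    ctr d (x * y) = ctr d x * y + x * ctr d y := by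
  refine mem2_induction (P := fun x => ctr d (x * y) = ctr d x * y + x * ctr d y)
    ?_ ?_ ?_ ?_ x hx
  · simp
  · intro x1 x2 h1 h2
    simp only [add_mul, map_add, h1, h2]; abel
  · intro c x hx
    simp only [smul_mul_assoc, map_smul, hx, smul_add]
  · intro u v
    have key : ctr d (ι ℝ u * ι ℝ v) = d u • ι ℝ v - d v • ι ℝ u := by
      rw [ctr_ι_mul, ctr_ι, mul_algebraMap']
    rw [mul_assoc, ctr_ι_mul, ctr_ι_mul, key]
    simp only [mul_sub, mul_smul_comm, sub_mul, smul_mul_assoc, mul_assoc]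
    abel

lemma ctr_pow_zero (d : Module.Dual ℝ M) {x : E} (hx : x ∈ ⋀[ℝ]^2 M)
    (hc : ctr d x = 0) : ∀ m : ℕ, ctr d (x ^ m) = 0 := by
  intro m
  induction m with
  | zero => simpa using ctr_one d
  | succ m ih => rw [pow_succ', ctr_mul2 d hx, hc, ih, zero_mul, mul_zero, add_zero]

lemma ctr_mem_range_ι (d : Module.Dual ℝ M) {x : E} (hx : x ∈ ⋀[ℝ]^2 M) :
    ctr d x ∈ LinearMap.range (ι ℝ : M →ₗ[ℝ] E) := by
  refine mem2_induction (P := fun x => ctr d x ∈ LinearMap.range (ι ℝ : M →ₗ[ℝ] E))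
    ?_ ?_ ?_ ?_ x hx
  · simp
  · intro x y hx hy; rw [map_add]; exact add_mem hx hy
  · intro c x hx; rw [map_smul]; exact Submodule.smul_mem _ c hx
  · intro u v
    refine ⟨d u • v - d v • u, ?_⟩
    rw [map_sub, map_smul, map_smul, ctr_ι_mul, ctr_ι, mul_algebraMap']


section FinDim
variable [FiniteDimensional ℝ M]

lemma eq_zero_of_ctr_eq_zero {x : E} (hx : x ∈ ⋀[ℝ]^2 M)
    (h : ∀ d : Module.Dual ℝ M, ctr d x = 0) : x = 0 := by
  classical
  set e := Module.finBasis ℝ M with he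
  set L : E →ₗ[ℝ] E :=
    ∑ i : Fin (Module.finrank ℝ M), ∑ j : Fin (Module.finrank ℝ M),
      (LinearMap.mulRight ℝ (ι ℝ (e i) * ι ℝ (e j))) ∘ₗ (ctr (e.coord j)) ∘ₗ (ctr (e.coord i))
    with hL
  have hLval : ∀ y ∈ ⋀[ℝ]^2 M, L y = (2 : ℝ) • y := by
    intro y hy
    refine mem2_induction (P := fun y => L y = (2 : ℝ) • y) (by simp) ?_ ?_ ?_ y hy
    · intro a b ha hb; rw [map_add, ha, hb, smul_add]
    · intro c a ha; rw [map_smul, ha, smul_comm]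
    · intro u v
      have happ : ∀ z, L z =
          ∑ i : Fin (Module.finrank ℝ M), ∑ j : Fin (Module.finrank ℝ M),
            (ctr (e.coord j) (ctr (e.coord i) z)) * (ι ℝ (e i) * ι ℝ (e j)) := by
        intro z
        rw [hL]
        simp [LinearMap.sum_apply, LinearMap.comp_apply, LinearMap.mulRight_apply, mul_assoc]
      rw [happ]
      have key : ∀ i j : Fin (Module.finrank ℝ M),
          (ctr (e.coord j) (ctr (e.coord i) (ι ℝ u * ι ℝ v))) * (ι ℝ (e i) * ι ℝ (e j)) =
          (e.coord i u * e.coord j v) • (ι ℝ (e i) * ι ℝ (e j))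
          - (e.coord i v * e.coord j u) • (ι ℝ (e i) * ι ℝ (e j)) := by
        intro i j
        have h1 : ctr (e.coord i) (ι ℝ u * ι ℝ v)
            = e.coord i u • ι ℝ v - e.coord i v • ι ℝ u := by
          rw [ctr_ι_mul, ctr_ι, mul_algebraMap']
        rw [h1, map_sub, map_smul, map_smul, ctr_ι, ctr_ι, sub_mul]
        rw [Algebra.smul_def, Algebra.smul_def, mul_assoc, mul_assoc,
          ← Algebra.smul_def, ← Algebra.smul_def, ← Algebra.smul_def, ← Algebra.smul_def,
          smul_smul, smul_smul]
      simp only [key, Finset.sum_sub_distrib]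
      have expand : ∀ w w' : M,
          (∑ i : Fin (Module.finrank ℝ M), ∑ j : Fin (Module.finrank ℝ M),
            (e.coord i w * e.coord j w') • (ι ℝ (e i) * ι ℝ (e j))) = ι ℝ w * ι ℝ w' := by
        intro w w'
        have : ∀ i j, (e.coord i w * e.coord j w') • (ι ℝ (e i) * ι ℝ (e j))
            = (e.coord i w • ι ℝ (e i)) * (e.coord j w' • ι ℝ (e j)) := by
          intro i j; rw [smul_mul_smul_comm]
        simp only [this]
        rw [← Finset.sum_mul_sum]
        have hw : ∀ w'' : M, (∑ i, e.coord i w'' • ι ℝ (e i)) = ι ℝ w'' := by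
          intro w''
          simp_rw [← map_smul]
          rw [← map_sum]
          congr 1
          simpa [Module.Basis.coord_apply] using e.sum_repr w''
        rw [hw w, hw w']
      rw [expand u v, expand v u, anticomm u v, two_smul]
      abel
  have h0 : L x = 0 := by
    rw [hL]
    simp only [LinearMap.sum_apply, LinearMap.comp_apply]
    simp [h]
  have h2 : (2 : ℝ) • x = 0 := by rw [← hLval x hx, h0]
  have := smul_eq_zero.mp h2
  rcases this with h | h
  · norm_num at h
  · exact h

end FinDim

lemma pow_succ_of_sq_zero (x y : E) (h : Commute x y) (hy : y * y = 0) :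
    ∀ n : ℕ, (x + y) ^ (n + 1) = x ^ (n + 1) + (n + 1) • (x ^ n * y) := by
  intro n
  induction n with
  | zero => simp
  | succ n ih =>
    have hyx : y * x = x * y := h.symm.eq
    calc (x + y) ^ (n + 2) = (x + y) ^ (n + 1) * (x + y) := by rw [pow_succ]
      _ = (x ^ (n + 1) + (n + 1) • (x ^ n * y)) * (x + y) := by rw [ih]
      _ = x ^ (n + 2) + x ^ (n + 1) * y + (n + 1) • (x ^ n * (y * x)) +
          (n + 1) • (x ^ n * (y * y)) := by
        simp only [add_mul, mul_add, smul_add, smul_mul_assoc, mul_assoc, pow_succ]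
        abel
      _ = x ^ (n + 2) + x ^ (n + 1) * y + (n + 1) • (x ^ (n+1) * y) := by
        rw [hy, hyx, mul_zero, smul_zero, add_zero, ← mul_assoc, ← pow_succ]
      _ = x ^ (n + 2) + (n + 2) • (x ^ (n + 1) * y) := by
        rw [succ_nsmul (x ^ (n+1) * y) (n+1)]
        abel

variable {κ : Type*} [DecidableEq κ]

lemma sum_pow_card_succ_zero (s : Finset κ) (x : κ → E)
    (hcomm : ∀ i j, Commute (x i) (x j)) (hsq : ∀ i, x i * x i = 0) :
    (∑ i ∈ s, x i) ^ (s.card + 1) = 0 := by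
  classical
  induction s using Finset.induction with
  | empty => simp
  | insert a s ha ih =>
    rw [Finset.sum_insert ha, Finset.card_insert_of_notMem ha, add_comm (x a)]
    rw [pow_succ_of_sq_zero _ _ (Commute.sum_left _ _ _ (fun i _ => hcomm i a)) (hsq a)]
    rw [ih, pow_succ, ih]
    simp

lemma sum_pow_card (s : Finset κ) (x : κ → E)
    (hcomm : ∀ i j, Commute (x i) (x j)) (hsq : ∀ i, x i * x i = 0) :
    (∑ i ∈ s, x i) ^ s.card =
      (Nat.factorial s.card) • s.noncommProd x (fun i _ j _ _ => hcomm i j) := by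
  classical
  induction s using Finset.induction with
  | empty => simp; exact (Finset.noncommProd_empty x _).symm
  | insert a s ha ih =>
    rw [Finset.sum_insert ha, Finset.card_insert_of_notMem ha, add_comm (x a)]
    rw [pow_succ_of_sq_zero _ _ (Commute.sum_left _ _ _ (fun i _ => hcomm i a)) (hsq a)]
    rw [sum_pow_card_succ_zero s x hcomm hsq, ih]
    erw [Finset.noncommProd_insert_of_notMem s a x _ ha]
    have hcp : Commute (x a) (s.noncommProd x (fun i _ j _ _ => hcomm i j)) :=
      Finset.noncommProd_commute _ _ _ _ (fun i _ => hcomm a i)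
    rw [zero_add, smul_mul_assoc, ← hcp.eq, smul_smul, ← Nat.factorial_succ]

lemma noncommProd_eq_mul_erase {s : Finset κ} {i : κ} (hi : i ∈ s)
    (x : κ → E) (hcomm : ∀ i j, Commute (x i) (x j)) :
    s.noncommProd x (fun a _ b _ _ => hcomm a b)
      = x i * (s.erase i).noncommProd x (fun a _ b _ _ => hcomm a b) :=
  (Finset.mul_noncommProd_erase s hi x (fun a _ b _ _ => hcomm a b)
    (fun a _ b _ _ => hcomm a b)).symm

lemma ιMulti_ne_zero {l : ℕ} {f : Fin l → M} (hf : LinearIndependent ℝ f) :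
    ιMulti ℝ l f ≠ 0 := by
  classical
  -- build a retraction g : M →ₗ (Fin l → ℝ) with g (f i) = Pi.single i 1
  set F : (Fin l → ℝ) →ₗ[ℝ] M := Fintype.linearCombination ℝ f with hF
  have hFapp : ∀ c, F c = ∑ i, c i • f i := fun c => by
    simp [hF, Fintype.linearCombination_apply]
  have hker : LinearMap.ker F = ⊥ := by
    rw [LinearMap.ker_eq_bot']
    intro c hc
    rw [hFapp] at hc
    funext i
    exact Fintype.linearIndependent_iff.mp hf c hc i
  obtain ⟨g, hg⟩ := F.exists_leftInverse_of_injective hker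
  have hgf : ∀ i, g (f i) = Pi.single i 1 := by
    intro i
    have h1 : F (Pi.single i 1) = f i := by
      rw [hFapp]
      simp [Pi.single_apply]
    have := congrArg (fun φ => φ (Pi.single i (1:ℝ))) hg
    simpa [h1] using this
  set A : M [⋀^Fin l]→ₗ[ℝ] ℝ :=
    (Matrix.detRowAlternating : (Fin l → ℝ) [⋀^Fin l]→ₗ[ℝ] ℝ).compLinearMap g with hA
  have hAf : A f = 1 := by
    rw [hA]
    have : (g ∘ f) = fun i => Pi.single i (1:ℝ) := funext fun i => hgf i
    simp only [AlternatingMap.compLinearMap_apply]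
    show Matrix.detRowAlternating (fun i => g (f i)) = 1
    have hmat : (Matrix.of fun i => g (f i)) = (1 : Matrix (Fin l) (Fin l) ℝ) := by
      ext i j
      rw [Matrix.one_apply]
      simp [hgf, Pi.single_apply, eq_comm]
    show Matrix.det (Matrix.of fun i => g (f i)) = 1
    rw [hmat, Matrix.det_one]
  intro hzero
  have := congrArg (liftAlternating
    (Function.update (fun i => (0 : M [⋀^Fin i]→ₗ[ℝ] ℝ)) l A)) hzero
  rw [liftAlternating_apply_ιMulti, Function.update_self, hAf, map_zero] at this
  exact one_ne_zero this

lemma ι_mul_ιMulti {n : ℕ} (m : M) (f : Fin n → M) :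
    ι ℝ m * ιMulti ℝ n f = ιMulti ℝ (n + 1) (Fin.cons m f) := by
  have htail : Matrix.vecTail (Fin.cons m f) = f := by
    funext i
    simp [Matrix.vecTail, Fin.cons_succ]
  rw [ιMulti_succ_apply, Fin.cons_zero, htail]

lemma extend_family [FiniteDimensional ℝ M] {p : ℕ} (a : Fin p → M)
    (ha : LinearIndependent ℝ a) :
    ∀ l : ℕ, (hpl : p ≤ l) → l ≤ Module.finrank ℝ M →
      ∃ f : Fin l → M, LinearIndependent ℝ f ∧ ∀ i : Fin p, f (Fin.castLE hpl i) = a i := by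
  intro l hpl hl
  induction l, hpl using Nat.le_induction with
  | base =>
    exact ⟨a, ha, fun i => by congr⟩
  | succ l hpl ih =>
    obtain ⟨f, hf, hfa⟩ := ih (le_trans (Nat.le_succ l) hl)
    obtain ⟨z, hz⟩ := exists_linearIndependent_snoc_of_lt_finrank hf hl
    refine ⟨Fin.snoc f z, hz, fun i => ?_⟩
    have : Fin.castLE (le_trans hpl (Nat.le_succ l)) i
        = Fin.castSucc (Fin.castLE hpl i) := Fin.ext rfl
    rw [this, Fin.snoc_castSucc, hfa]

/-- Decomposition of a 2-form of finite rank as a sum of decomposables. -/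
lemma decomp [FiniteDimensional ℝ M] :
    ∀ (k : ℕ) (ω : E), ω ∈ ⋀[ℝ]^2 M → ω ^ (k + 1) = 0 →
      ∃ a b : Fin k → M, ω = ∑ i, ι ℝ (a i) * ι ℝ (b i) := by
  intro k
  induction k with
  | zero =>
    intro ω _ h1
    rw [pow_one] at h1
    exact ⟨finZeroElim, finZeroElim, by simp [h1]⟩
  | succ k IH =>
    intro ω hω2 hpow
    by_cases hc : ∀ d : Module.Dual ℝ M, ctr d ω = 0
    · have hω0 : ω = 0 := eq_zero_of_ctr_eq_zero hω2 hc
      exact ⟨fun _ => 0, fun _ => 0, by simp [hω0]⟩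
    · push_neg at hc
      obtain ⟨d, hd⟩ := hc
      obtain ⟨a', ha'⟩ := ctr_mem_range_ι d hω2
      have ha'0 : a' ≠ 0 := by
        intro h0
        rw [h0, map_zero] at ha'
        exact hd ha'.symm
      obtain ⟨d', hd'⟩ : ∃ d' : Module.Dual ℝ M, d' a' ≠ 0 := by
        by_contra hno
        push_neg at hno
        exact ha'0 ((Module.forall_dual_apply_eq_zero_iff ℝ a').mp hno)
      set c : ℝ := d' a' with hcdef
      obtain ⟨b', hb'⟩ := ctr_mem_range_ι d' hω2
      -- basic contraction facts
      have hda' : d a' = 0 := by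
        have h1 : ctr d (ι ℝ a') = 0 := by rw [ha']; exact ctr_ctr d ω
        rw [ctr_ι] at h1
        exact (map_eq_zero_iff _ ((algebraMap ℝ E).injective)).mp h1
      have hd'b' : d' b' = 0 := by
        have h1 : ctr d' (ι ℝ b') = 0 := by rw [hb']; exact ctr_ctr d' ω
        rw [ctr_ι] at h1
        exact (map_eq_zero_iff _ ((algebraMap ℝ E).injective)).mp h1
      have hdb' : d b' = -c := by
        have h1 : ctr d (ι ℝ b') = -(ctr d' (ι ℝ a')) := by
          rw [ha', hb']
          exact ctr_comm d d' ω
        rw [ctr_ι, ctr_ι, ← map_neg] at h1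
        exact (algebraMap ℝ E).injective h1
      set t : E := ι ℝ a' * ι ℝ b' with ht
      have ht2 : t ∈ ⋀[ℝ]^2 M := pair_mem a' b'
      have htt : t * t = 0 := pair_sq a' b'
      have hctrdt : ctr d t = c • ι ℝ a' := by
        rw [ht, ctr_ι_mul, ctr_ι, mul_algebraMap', hda', hdb', zero_smul, zero_sub,
          neg_smul, neg_neg]
      have hctrd't : ctr d' t = c • ι ℝ b' := by
        rw [ht, ctr_ι_mul, ctr_ι, mul_algebraMap', hd'b', zero_smul, sub_zero, hcdef]
      set ω' : E := ω - c⁻¹ • t with hω'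
      have hω'2 : ω' ∈ ⋀[ℝ]^2 M := by
        exact sub_mem hω2 (Submodule.smul_mem _ _ ht2)
      have hdω' : ctr d ω' = 0 := by
        rw [hω', map_sub, map_smul, hctrdt, ← ha', smul_smul, inv_mul_cancel₀ hd', one_smul,
          sub_self]
      have hd'ω' : ctr d' ω' = 0 := by
        rw [hω', map_sub, map_smul, hctrd't, ← hb', smul_smul, inv_mul_cancel₀ hd', one_smul,
          sub_self]
      -- expand the power
      have hcomm : Commute ω' (c⁻¹ • t) := (comm22 hω'2 ht2).smul_right c⁻¹
      have hsq : (c⁻¹ • t) * (c⁻¹ • t) = 0 := by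
        rw [smul_mul_smul_comm, htt, smul_zero]
      have hexp : (0 : E) = ω' ^ (k + 2) + (k + 2) • (ω' ^ (k + 1) * (c⁻¹ • t)) := by
        rw [← hpow]
        have : ω = ω' + c⁻¹ • t := by rw [hω']; abel
        rw [this, pow_succ_of_sq_zero _ _ hcomm hsq (k + 1)]
      have step1 : ι ℝ a' * ω' ^ (k + 1) = 0 := by
        have h1 := congrArg (ctr d) hexp
        rw [map_zero, map_add, ctr_pow_zero d hω'2 hdω', zero_add, map_nsmul,
          mul_smul_comm, map_smul] at h1
        have h2 : ctr d (ω' ^ (k + 1) * t) = c • (ι ℝ a' * ω' ^ (k + 1)) := by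
          rw [((comm22 ht2 hω'2).pow_right (k + 1)).eq.symm] at *
          rw [ctr_mul2 d ht2, hctrdt, ctr_pow_zero d hω'2 hdω', mul_zero, add_zero,
            smul_mul_assoc]
        rw [h2, smul_smul, inv_mul_cancel₀ hd', one_smul] at h1
        have h3 : ((k + 2 : ℕ) : ℝ) • (ι ℝ a' * ω' ^ (k + 1)) = 0 := by
          rw [Nat.cast_smul_eq_nsmul]
          exact h1.symm
        rcases smul_eq_zero.mp h3 with h | h
        · exact absurd h (by positivity)
        · exact h
      have step2 : ω' ^ (k + 1) = 0 := by
        have h1 := congrArg (ctr d') step1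
        rw [map_zero, ctr_ι_mul, ctr_pow_zero d' hω'2 hd'ω', mul_zero, sub_zero, ← hcdef] at h1
        rcases smul_eq_zero.mp h1 with h | h
        · exact absurd h hd'
        · exact h
      obtain ⟨a, b, hab⟩ := IH ω' hω'2 step2
      refine ⟨Fin.snoc a (c⁻¹ • a'), Fin.snoc b b', ?_⟩
      rw [Fin.sum_univ_castSucc]
      simp only [Fin.snoc_castSucc, Fin.snoc_last]
      rw [← hab, map_smul, smul_mul_assoc]
      rw [hω']
      abel

end Statement2Aux



open Statement2Aux in
theorem statement2 (V : Type*) [AddCommGroup V] [Module ℝ V] [FiniteDimensional ℝ V]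
    (p : ℕ) (hp1 : 1 ≤ p) (Ω : ⋀[ℝ]^2 (Module.Dual ℝ V))
    (hp : (Ω : ExteriorAlgebra ℝ (Module.Dual ℝ V)) ^ p ≠ 0)
    (hp' : (Ω : ExteriorAlgebra ℝ (Module.Dual ℝ V)) ^ (p + 1) = 0) :
    ∀ l : ℕ, p ≤ l → l ≤ Module.finrank ℝ V - 2 →
      ∃ β : ⋀[ℝ]^l (Module.Dual ℝ V), β ≠ 0 ∧
        (Ω : ExteriorAlgebra ℝ (Module.Dual ℝ V)) * (β : ExteriorAlgebra ℝ (Module.Dual ℝ V))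
          = 0 := by
  classical
  intro l hl1 hl2
  set M := Module.Dual ℝ V with hM
  set ω : ExteriorAlgebra ℝ M := (Ω : ExteriorAlgebra ℝ M) with hωdef
  have hω2 : ω ∈ ⋀[ℝ]^2 M := Ω.2
  obtain ⟨a, b, hab⟩ := decomp p ω hω2 hp'
  set x : Fin p → ExteriorAlgebra ℝ M := fun i => ι ℝ (a i) * ι ℝ (b i) with hxdef
  have hx2 : ∀ i, x i ∈ ⋀[ℝ]^2 M := fun i => pair_mem _ _
  have hcomm : ∀ i j, Commute (x i) (x j) := fun i j => comm22 (hx2 i) (hx2 j)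
  have hsq : ∀ i, x i * x i = 0 := fun i => pair_sq _ _
  have hωsum : ω = ∑ i, x i := hab
  set P : ExteriorAlgebra ℝ M :=
    Finset.noncommProd Finset.univ x (fun a _ b _ _ => hcomm a b) with hPdef
  have hPform : ω ^ p = (Nat.factorial p) • P := by
    have h := sum_pow_card (Finset.univ : Finset (Fin p)) x hcomm hsq
    rw [Finset.card_univ, Fintype.card_fin] at h
    rw [hωsum, h, hPdef]
  have hPne : P ≠ 0 := by
    intro h0
    exact hp (by rw [hωdef] at hPform; rw [hPform, h0, smul_zero])
  -- the family `a` is linearly independent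
  have hindep : LinearIndependent ℝ a := by
    rw [Fintype.linearIndependent_iff]
    intro g hg i
    by_contra hgi
    apply hPne
    -- express ι (a i) in terms of the other ι (a k)
    have h1 : g i • a i = -∑ k ∈ Finset.univ.erase i, g k • a k := by
      refine eq_neg_of_add_eq_zero_left ?_
      have hsplit := Finset.add_sum_erase Finset.univ (fun k => g k • a k) (Finset.mem_univ i)
      rw [hsplit]
      exact hg
    have h2 : a i = ∑ k ∈ Finset.univ.erase i, (-(g i)⁻¹ * g k) • a k := by
      have := congrArg (fun z => (g i)⁻¹ • z) h1
      simp only [smul_smul, inv_mul_cancel₀ hgi, one_smul, smul_neg, Finset.smul_sum] at this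
      rw [this, ← Finset.sum_neg_distrib]
      refine Finset.sum_congr rfl fun k _ => ?_
      rw [← neg_smul, neg_mul]
    have h3 : ι ℝ (a i) = ∑ k ∈ Finset.univ.erase i, (-(g i)⁻¹ * g k) • ι ℝ (a k) := by
      rw [congrArg (ι ℝ (M := M)) h2, map_sum]
      simp only [map_smul]
    rw [hPdef, noncommProd_eq_mul_erase (Finset.mem_univ i) x hcomm]
    have hxi : x i = (∑ k ∈ Finset.univ.erase i, (-(g i)⁻¹ * g k) • ι ℝ (a k)) * ι ℝ (b i) := by
      rw [hxdef, ← h3]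
    rw [hxi, Finset.sum_mul, Finset.sum_mul]
    refine Finset.sum_eq_zero fun k hk => ?_
    rw [smul_mul_assoc, smul_mul_assoc]
    rw [noncommProd_eq_mul_erase hk x hcomm]
    set Q' := ((Finset.univ.erase i).erase k).noncommProd x
      (fun a _ b _ _ => hcomm a b) with hQ'def
    have hbx : ι ℝ (b i) * x k = x k * ι ℝ (b i) := (comm2 (b i) (hx2 k)).eq
    have h0 : ι ℝ (a k) * x k = 0 := by
      rw [hxdef, ← mul_assoc, ι_sq_zero, zero_mul]
    have hre : ι ℝ (a k) * ι ℝ (b i) * (x k * Q') =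
        (ι ℝ (a k) * x k) * (ι ℝ (b i) * Q') := by
      rw [mul_assoc, ← mul_assoc (ι ℝ (b i)), hbx]
      noncomm_ring
    rw [hre, h0, zero_mul, smul_zero]
  -- extend `a` to an independent family of size `l`
  have hfrM : Module.finrank ℝ M = Module.finrank ℝ V := Subspace.dual_finrank_eq
  have hlM : l ≤ Module.finrank ℝ M := by
    rw [hfrM]
    exact le_trans hl2 (Nat.sub_le _ 2)
  obtain ⟨f, hf, hfa⟩ := extend_family a hindep l hl1 hlM
  set β₀ : ExteriorAlgebra ℝ M := ιMulti ℝ l f with hβ₀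
  have hβmem : β₀ ∈ ⋀[ℝ]^l M := ιMulti_range ℝ l (Set.mem_range_self f)
  refine ⟨⟨β₀, hβmem⟩, ?_, ?_⟩
  · simp only [ne_eq, Submodule.mk_eq_zero]
    exact ιMulti_ne_zero hf
  · show ω * β₀ = 0
    rw [hωsum, Finset.sum_mul]
    refine Finset.sum_eq_zero fun i _ => ?_
    have hil : (i : ℕ) < l := lt_of_lt_of_le i.isLt hl1
    rw [hxdef]
    show ι ℝ (a i) * ι ℝ (b i) * β₀ = 0
    rw [mul_assoc, hβ₀, ι_mul_ιMulti, ι_mul_ιMulti]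
    set w : Fin (l + 1 + 1) → M := Fin.cons (a i) (Fin.cons (b i) f) with hw
    have hidx : w ⟨(i : ℕ) + 2, by omega⟩ = a i := by
      have hstep : (⟨(i : ℕ) + 2, by omega⟩ : Fin (l + 1 + 1))
          = Fin.succ (Fin.succ ⟨(i : ℕ), hil⟩) := by
        apply Fin.ext
        simp [Fin.succ]
      rw [hw, hstep, Fin.cons_succ, Fin.cons_succ]
      have : (⟨(i : ℕ), hil⟩ : Fin l) = Fin.castLE hl1 i := by
        apply Fin.ext
        rfl
      rw [this, hfa]
    have h00 : w 0 = a i := by rw [hw, Fin.cons_zero]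
    refine AlternatingMap.map_eq_zero_of_eq _ w (i := 0) (j := ⟨(i : ℕ) + 2, by omega⟩) ?_ ?_
    · rw [h00, hidx]
    · intro hcon
      have := congrArg Fin.val hcon
      simp at this
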